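/- Let π ∈ S_n and θ > 0, and let σ ~ MM(π, θ) under the Kendall's-τ distance. Then ∑_{i=1}^n E[σ(i)] = n(n+1)/2, and for any items i, j with π(i) < π(j), E[σ(i)] < E[σ(j)]; hence sorting items by expected rank recovers π (Borda is a consistent estimator of the modal ranking). -/

import Mathlib

def kendall {n : ℕ} (σ π : Equiv.Perm (Fin n)) : ℕ :=
  (Finset.univ.filter (fun p : Fin n × Fin n =>
    p.1 < p.2 ∧ ((σ p.1 < σ p.2 ∧ π p.2 < π p.1) ∨ (σ p.2 < σ p.1 ∧ π p.1 < π p.2)))).card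

noncomputable def mallowsP {n : ℕ} (θ : ℝ) (π σ : Equiv.Perm (Fin n)) : ℝ :=
  Real.exp (-θ * kendall σ π) / ∑ σ' : Equiv.Perm (Fin n), Real.exp (-θ * kendall σ' π)

noncomputable def expRank {n : ℕ} (θ : ℝ) (π : Equiv.Perm (Fin n)) (i : Fin n) : ℝ :=
  ∑ σ : Equiv.Perm (Fin n), (((σ i : ℕ) : ℝ) + 1) * mallowsP θ π σ

namespace Stmt18Aux

/-- discordance indicator on naturals -/
def ind (x y p q : ℕ) : ℕ := if (x < y ∧ q < p) ∨ (y < x ∧ p < q) then 1 else 0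

variable {n : ℕ}

def Efun (σ π : Equiv.Perm (Fin n)) (p : Fin n × Fin n) : ℕ :=
  ind (σ p.1) (σ p.2) (π p.1) (π p.2)

def Ffun (σ π : Equiv.Perm (Fin n)) (i j : Fin n) (p : Fin n × Fin n) : ℕ :=
  ind (σ p.1) (σ p.2) (π (Equiv.swap i j p.1)) (π (Equiv.swap i j p.2))

lemma ind_symm (x y p q : ℕ) : ind y x q p = ind x y p q := by
  unfold ind; split_ifs <;> omega

lemma Efun_swap (σ π : Equiv.Perm (Fin n)) (a b : Fin n) :
    Efun σ π (b, a) = Efun σ π (a, b) := by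
  simp only [Efun]; exact ind_symm _ _ _ _

lemma indicator_eq (σ π : Equiv.Perm (Fin n)) (p : Fin n × Fin n) :
    (if p.1 < p.2 ∧ ((σ p.1 < σ p.2 ∧ π p.2 < π p.1) ∨ (σ p.2 < σ p.1 ∧ π p.1 < π p.2))
      then 1 else 0)
      = if p.1 < p.2 then Efun σ π p else 0 := by
  simp only [Efun, ind, Fin.lt_def]
  split_ifs <;> omega

lemma two_mul_kendall (σ π : Equiv.Perm (Fin n)) :
    ∑ p : Fin n × Fin n, Efun σ π p = 2 * kendall σ π := by
  have h1 : kendall σ π = ∑ p : Fin n × Fin n, if p.1 < p.2 then Efun σ π p else 0 := by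
    rw [kendall, Finset.card_filter]
    exact Finset.sum_congr rfl fun p _ => indicator_eq σ π p
  have h2 : ∑ p : Fin n × Fin n, (if p.2 < p.1 then Efun σ π p else 0)
      = ∑ p : Fin n × Fin n, (if p.1 < p.2 then Efun σ π p else 0) := by
    apply Fintype.sum_equiv (Equiv.prodComm (Fin n) (Fin n))
    rintro ⟨a, b⟩
    simp [Efun_swap]
  have h3 : ∀ p : Fin n × Fin n, Efun σ π p
      = (if p.1 < p.2 then Efun σ π p else 0) + (if p.2 < p.1 then Efun σ π p else 0) := by
    rintro ⟨a, b⟩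
    rcases lt_trichotomy a b with h | h | h
    · simp [h, not_lt.mpr h.le]
    · subst h
      simp [Efun, ind]
    · simp [h, not_lt.mpr h.le]
  calc ∑ p : Fin n × Fin n, Efun σ π p
      = ∑ p : Fin n × Fin n, ((if p.1 < p.2 then Efun σ π p else 0)
          + (if p.2 < p.1 then Efun σ π p else 0)) := Finset.sum_congr rfl fun p _ => h3 p
    _ = (∑ p : Fin n × Fin n, (if p.1 < p.2 then Efun σ π p else 0))
          + ∑ p : Fin n × Fin n, (if p.2 < p.1 then Efun σ π p else 0) :=
        Finset.sum_add_distrib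
    _ = 2 * kendall σ π := by rw [h2, ← h1]; ring

lemma sum_F_eq (σ π : Equiv.Perm (Fin n)) (i j : Fin n) :
    ∑ p : Fin n × Fin n, Ffun σ π i j p
      = ∑ p : Fin n × Fin n, Efun (σ * Equiv.swap i j) π p := by
  apply Fintype.sum_equiv ((Equiv.swap i j).prodCongr (Equiv.swap i j))
  rintro ⟨a, b⟩
  simp [Ffun, Efun, Equiv.Perm.mul_apply, Equiv.swap_apply_self]

lemma sum_pair_eq (g : Fin n × Fin n → ℕ) (i j : Fin n) :
    ∑ p : Fin n × Fin n, g (Equiv.swap i j p.1, Equiv.swap i j p.2)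
      = ∑ p : Fin n × Fin n, g p := by
  have := Equiv.sum_comp ((Equiv.swap i j).prodCongr (Equiv.swap i j)) g
  simpa [Prod.map] using this

lemma kendall_lt (σ π : Equiv.Perm (Fin n)) (i j : Fin n) (hπ : π i < π j) (hσ : σ i < σ j) :
    kendall σ π < kendall (σ * Equiv.swap i j) π := by
  have hij : i ≠ j := fun h => absurd hπ (by rw [h]; exact lt_irrefl _)
  have h1 : (σ i : ℕ) < σ j := hσ
  have h2 : (π i : ℕ) < π j := hπ
  have hsi : Equiv.swap i j i = j := Equiv.swap_apply_left i j
  have hsj : Equiv.swap i j j = i := Equiv.swap_apply_right i j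
  have key : ∀ p : Fin n × Fin n,
      Efun σ π p + Efun σ π (Equiv.swap i j p.1, Equiv.swap i j p.2)
        ≤ Ffun σ π i j p + Ffun σ π i j (Equiv.swap i j p.1, Equiv.swap i j p.2) := by
    rintro ⟨a, b⟩
    simp only [Efun, Ffun]
    rcases eq_or_ne a i with rfl | hai
    · rcases eq_or_ne b a with rfl | hbi
      · simp only [hsi, hsj]; unfold ind; split_ifs <;> omega
      · rcases eq_or_ne b j with rfl | hbj
        · simp only [hsi, hsj]; unfold ind; split_ifs <;> omega
        · simp only [hsi, hsj, Equiv.swap_apply_of_ne_of_ne hbi hbj]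
          unfold ind; split_ifs <;> omega
    · rcases eq_or_ne a j with rfl | haj
      · rcases eq_or_ne b i with rfl | hbi
        · simp only [hsi, hsj]; unfold ind; split_ifs <;> omega
        · rcases eq_or_ne b a with rfl | hbj
          · simp only [hsi, hsj]; unfold ind; split_ifs <;> omega
          · simp only [hsi, hsj, Equiv.swap_apply_of_ne_of_ne hbi hbj]
            unfold ind; split_ifs <;> omega
      · rcases eq_or_ne b i with rfl | hbi
        · simp only [hsi, hsj, Equiv.swap_apply_of_ne_of_ne hai haj]
          unfold ind; split_ifs <;> omega
        · rcases eq_or_ne b j with rfl | hbj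
          · simp only [hsi, hsj, Equiv.swap_apply_of_ne_of_ne hai haj]
            unfold ind; split_ifs <;> omega
          · simp only [Equiv.swap_apply_of_ne_of_ne hai haj,
              Equiv.swap_apply_of_ne_of_ne hbi hbj]
            unfold ind; split_ifs <;> omega
  have strict : Efun σ π (i, j) + Efun σ π (Equiv.swap i j i, Equiv.swap i j j)
      < Ffun σ π i j (i, j) + Ffun σ π i j (Equiv.swap i j i, Equiv.swap i j j) := by
    simp only [Efun, Ffun, hsi, hsj]
    unfold ind; split_ifs <;> omega
  have hsum : ∑ p : Fin n × Fin n,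
      (Efun σ π p + Efun σ π (Equiv.swap i j p.1, Equiv.swap i j p.2))
      < ∑ p : Fin n × Fin n,
      (Ffun σ π i j p + Ffun σ π i j (Equiv.swap i j p.1, Equiv.swap i j p.2)) :=
    Finset.sum_lt_sum (fun p _ => key p) ⟨(i, j), Finset.mem_univ _, strict⟩
  rw [Finset.sum_add_distrib, Finset.sum_add_distrib,
    sum_pair_eq (Efun σ π) i j, sum_pair_eq (Ffun σ π i j) i j] at hsum
  have hE := two_mul_kendall σ π
  have hF := two_mul_kendall (σ * Equiv.swap i j) π
  have hFe := sum_F_eq σ π i j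
  omega

lemma gauss : ∀ m : ℕ, ∑ k ∈ Finset.range m, ((k : ℝ) + 1) = ((m : ℝ) * ((m : ℝ) + 1)) / 2 := by
  intro m
  induction m with
  | zero => simp
  | succ k ih => rw [Finset.sum_range_succ, ih]; push_cast; ring

end Stmt18Aux

open Stmt18Aux in
theorem stmt18 {n : ℕ} (θ : ℝ) (hθ : 0 < θ) (π : Equiv.Perm (Fin n)) :
    (∑ i : Fin n, expRank θ π i) = ((n:ℝ) * ((n:ℝ)+1))/2
    ∧ ∀ i j : Fin n, π i < π j → expRank θ π i < expRank θ π j := by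
  have hZ : 0 < ∑ σ' : Equiv.Perm (Fin n), Real.exp (-θ * kendall σ' π) :=
    Finset.sum_pos (fun σ' _ => Real.exp_pos _) Finset.univ_nonempty
  have hsum1 : ∑ σ : Equiv.Perm (Fin n), mallowsP θ π σ = 1 := by
    unfold mallowsP; rw [← Finset.sum_div, div_self hZ.ne']
  constructor
  · have hrow : ∀ σ : Equiv.Perm (Fin n),
        ∑ i : Fin n, (((σ i : ℕ) : ℝ) + 1) = ((n : ℝ) * ((n : ℝ) + 1)) / 2 := by
      intro σ
      rw [show (∑ i : Fin n, (((σ i : ℕ) : ℝ) + 1)) = ∑ i : Fin n, (((i : ℕ) : ℝ) + 1) from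
        Equiv.sum_comp σ (fun k : Fin n => ((k : ℕ) : ℝ) + 1)]
      rw [Fin.sum_univ_eq_sum_range (fun k => ((k : ℝ) + 1))]
      exact gauss n
    unfold expRank
    rw [Finset.sum_comm]
    calc ∑ σ : Equiv.Perm (Fin n), ∑ i : Fin n, (((σ i : ℕ) : ℝ) + 1) * mallowsP θ π σ
        = ∑ σ : Equiv.Perm (Fin n), (∑ i : Fin n, (((σ i : ℕ) : ℝ) + 1)) * mallowsP θ π σ := by
          simp [Finset.sum_mul]
      _ = ∑ σ : Equiv.Perm (Fin n), ((n : ℝ) * ((n : ℝ) + 1)) / 2 * mallowsP θ π σ := by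
          exact Finset.sum_congr rfl fun σ _ => by rw [hrow σ]
      _ = ((n : ℝ) * ((n : ℝ) + 1)) / 2 := by
          rw [← Finset.mul_sum, hsum1, mul_one]
  · intro i j hπij
    have hij : i ≠ j := fun h => absurd hπij (by rw [h]; exact lt_irrefl _)
    have hmono : ∀ σ : Equiv.Perm (Fin n), σ i < σ j →
        mallowsP θ π (σ * Equiv.swap i j) < mallowsP θ π σ := by
      intro σ hσ
      have hk := kendall_lt σ π i j hπij hσ
      unfold mallowsP
      apply (div_lt_div_iff_of_pos_right hZ).mpr
      apply Real.exp_lt_exp.mpr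
      have hkr : (kendall σ π : ℝ) < kendall (σ * Equiv.swap i j) π := by exact_mod_cast hk
      nlinarith
    rw [← sub_pos]
    have hsplit : expRank θ π j - expRank θ π i
        = ∑ σ : Equiv.Perm (Fin n),
          ((((σ j : ℕ) : ℝ)) - (((σ i : ℕ) : ℝ))) * mallowsP θ π σ := by
      unfold expRank
      rw [← Finset.sum_sub_distrib]
      exact Finset.sum_congr rfl fun σ _ => by ring
    rw [hsplit]
    set g := fun σ : Equiv.Perm (Fin n) =>
      ((((σ j : ℕ) : ℝ)) - (((σ i : ℕ) : ℝ))) * mallowsP θ π σ with hg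
    rw [← Finset.sum_filter_add_sum_filter_not Finset.univ (fun σ => σ i < σ j) g]
    have hB : ∑ σ ∈ Finset.univ.filter (fun σ : Equiv.Perm (Fin n) => ¬ σ i < σ j), g σ
        = ∑ σ ∈ Finset.univ.filter (fun σ : Equiv.Perm (Fin n) => σ i < σ j),
            g (σ * Equiv.swap i j) := by
      apply Finset.sum_nbij' (fun σ => σ * Equiv.swap i j) (fun σ => σ * Equiv.swap i j)
      · intro σ hσ
        simp only [Finset.mem_filter, Finset.mem_univ, true_and, not_lt] at hσ ⊢
        have hne : σ j ≠ σ i := fun h => hij (σ.injective h).symm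
        simp only [Equiv.Perm.mul_apply, Equiv.swap_apply_left, Equiv.swap_apply_right]
        exact lt_of_le_of_ne hσ hne
      · intro σ hσ
        simp only [Finset.mem_filter, Finset.mem_univ, true_and] at hσ ⊢
        simp only [Equiv.Perm.mul_apply, Equiv.swap_apply_left, Equiv.swap_apply_right]
        exact not_lt.mpr hσ.le
      · intro σ _; simp [mul_assoc]
      · intro σ _; simp [mul_assoc]
      · intro σ _; simp [mul_assoc]
    rw [hB, ← Finset.sum_add_distrib]
    have hAne : (Finset.univ.filter (fun σ : Equiv.Perm (Fin n) => σ i < σ j)).Nonempty := by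
      rcases lt_or_gt_of_ne hij with h | h
      · exact ⟨1, by simp [h]⟩
      · exact ⟨Equiv.swap i j, by
          simp [Equiv.swap_apply_left, Equiv.swap_apply_right, h]⟩
    apply Finset.sum_pos _ hAne
    intro σ hσA
    simp only [Finset.mem_filter, Finset.mem_univ, true_and] at hσA
    have h1 : (σ i : ℕ) < σ j := hσA
    have hd : ((σ i : ℕ) : ℝ) < ((σ j : ℕ) : ℝ) := by exact_mod_cast h1
    have hp := hmono σ hσA
    have e1 : (σ * Equiv.swap i j) i = σ j := by
      simp [Equiv.Perm.mul_apply, Equiv.swap_apply_left]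
    have e2 : (σ * Equiv.swap i j) j = σ i := by
      simp [Equiv.Perm.mul_apply, Equiv.swap_apply_right]
    simp only [hg, e1, e2]
    nlinarith [mul_pos (sub_pos.mpr hd) (sub_pos.mpr hp)]
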